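/- For weight vectors ω, χ : Fin (n+1) → ℕ with positive coordinates, the composition e(χ/ω) ∘ e(ω/χ) : P(χ) → P(χ) equals the s''-th power map e(s''), where s'' = s(ω,χ)·s(χ,ω). -/

import Mathlib

noncomputable section

/-- The unit sphere in `ℂ^m` (the sphere `S^{2m-1}`). -/
abbrev Sph (m : ℕ) : Type := {z : Fin m → ℂ // ∑ i, ‖z i‖ ^ 2 = 1}

/-- The relation on the sphere whose quotient is the weighted projective space `P(χ)`:
`z ∼ w` iff `w = t ·_χ z` for some unimodular `t`. -/
def wRel (m : ℕ) (χ : Fin m → ℕ) (z w : Sph m) : Prop :=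
  ∃ t : ℂ, ‖t‖ = 1 ∧ ∀ i, (w : Fin m → ℂ) i = t ^ χ i * (z : Fin m → ℂ) i

/-- The weighted projective space `P(χ)`, with the quotient topology. -/
abbrev WP (m : ℕ) (χ : Fin m → ℕ) : Type := Quot (wRel m χ)

/-- The class `[z]_χ` of a point of the sphere in `P(χ)`. -/
def wpMk (m : ℕ) (χ : Fin m → ℕ) (z : Sph m) : WP m χ := Quot.mk _ z

/-- `s(χ,ω)`: the least positive integer `s` with `ω i ∣ s * χ i` for all `i`. -/
def sVal (m : ℕ) (χ ω : Fin m → ℕ) : ℕ := sInf {s : ℕ | 0 < s ∧ ∀ i, ω i ∣ s * χ i}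

/-- The exponents `d i = s(χ,ω)·χ i/ω i` of the map `e(χ/ω)`. -/
def dExp (m : ℕ) (χ ω : Fin m → ℕ) (i : Fin m) : ℕ := sVal m χ ω * χ i / ω i

/-- `IsNorm m χ v w` says that `w` is the normalisation `N_χ(v)`, i.e. `w` lies on the
sphere and has the form `(λ^{χ_0} v_0, …)` for some real `λ > 0`. -/
def IsNorm (m : ℕ) (χ : Fin m → ℕ) (v : Fin m → ℂ) (w : Sph m) : Prop :=
  ∃ l : ℝ, 0 < l ∧ ∀ i, (w : Fin m → ℂ) i = (l : ℂ) ^ χ i * v i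

/-- Coordinatewise powers of a point of the sphere. -/
def powVec (m : ℕ) (d : Fin m → ℕ) (z : Sph m) : Fin m → ℂ :=
  fun i => (z : Fin m → ℂ) i ^ d i

/-- `IsEMap m χ ω e` says that `e` is the canonical map `e(χ/ω) : P(ω) → P(χ)`:
it is continuous and sends `[z]_ω` to `[N_χ(z_0^{d_0}, …, z_n^{d_n})]_χ`. -/
def IsEMap (m : ℕ) (χ ω : Fin m → ℕ) (e : WP m ω → WP m χ) : Prop :=
  Continuous e ∧ ∀ z w : Sph m,
    IsNorm m χ (powVec m (dExp m χ ω) z) w → e (wpMk m ω z) = wpMk m χ w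

/-- `IsPowMap m χ r f` says that `f` is the `r`-th power map `e(r) : P(χ) → P(χ)`:
it is continuous and sends `[z]_χ` to `[N_χ(z_0^r, …, z_n^r)]_χ`. -/
def IsPowMap (m : ℕ) (χ : Fin m → ℕ) (r : ℕ) (f : WP m χ → WP m χ) : Prop :=
  Continuous f ∧ ∀ z w : Sph m,
    IsNorm m χ (fun i => (z : Fin m → ℂ) i ^ r) w → f (wpMk m χ z) = wpMk m χ w

lemma sVal_spec (m : ℕ) (χ ω : Fin m → ℕ) (hω : ∀ i, 1 ≤ ω i) :
    0 < sVal m χ ω ∧ ∀ i, ω i ∣ sVal m χ ω * χ i := by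
  have hne : {s : ℕ | 0 < s ∧ ∀ i, ω i ∣ s * χ i}.Nonempty := by
    refine ⟨∏ i, ω i, Finset.prod_pos (fun i _ => hω i), fun i => ?_⟩
    exact dvd_mul_of_dvd_left (Finset.dvd_prod_of_mem _ (Finset.mem_univ i)) _
  exact Nat.sInf_mem hne

lemma exists_norm (m : ℕ) (χ : Fin m → ℕ) (hχ : ∀ i, 1 ≤ χ i) (v : Fin m → ℂ)
    (j : Fin m) (hv : v j ≠ 0) : ∃ w : Sph m, IsNorm m χ v w := by
  set f : ℝ → ℝ := fun l => ∑ i, (l ^ χ i * ‖v i‖) ^ 2 with hf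
  have hcont : Continuous f := by
    apply continuous_finset_sum
    intro i _
    fun_prop
  have hf0 : f 0 = 0 := by
    simp only [hf]
    refine Finset.sum_eq_zero fun i _ => ?_
    rw [zero_pow (Nat.one_le_iff_ne_zero.mp (hχ i))]
    ring
  set M : ℝ := max 1 (‖v j‖)⁻¹ with hM
  have hvj : 0 < ‖v j‖ := norm_pos_iff.mpr hv
  have hM1 : (1 : ℝ) ≤ M := le_max_left _ _
  have hfM : 1 ≤ f M := by
    have h1 : (1 : ℝ) ≤ (M ^ χ j * ‖v j‖) ^ 2 := by
      have hMv : 1 ≤ M * ‖v j‖ := by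
        rw [← inv_mul_cancel₀ hvj.ne']
        exact mul_le_mul_of_nonneg_right (le_max_right _ _) hvj.le
      have hMM : M ≤ M ^ χ j := by
        calc M = M ^ 1 := (pow_one M).symm
        _ ≤ M ^ χ j := pow_le_pow_right₀ hM1 (hχ j)
      have : 1 ≤ M ^ χ j * ‖v j‖ :=
        le_trans hMv (mul_le_mul_of_nonneg_right hMM hvj.le)
      nlinarith
    have h2 : ∀ i ∈ Finset.univ, (0:ℝ) ≤ (M ^ χ i * ‖v i‖) ^ 2 :=
      fun i _ => sq_nonneg _
    calc (1:ℝ) ≤ (M ^ χ j * ‖v j‖) ^ 2 := h1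
    _ ≤ f M := Finset.single_le_sum h2 (Finset.mem_univ j)
  have hIVT : (1 : ℝ) ∈ Set.Icc (f 0) (f M) := ⟨by linarith, hfM⟩
  obtain ⟨l, hlmem, hfl⟩ := intermediate_value_Icc (by linarith [hM1] : (0:ℝ) ≤ M)
    hcont.continuousOn hIVT
  have hl0 : 0 < l := by
    rcases lt_or_eq_of_le hlmem.1 with h | h
    · exact h
    · exfalso; rw [← h] at hfl; rw [hf0] at hfl; linarith
  have hsum : ∑ i, ‖(l : ℂ) ^ χ i * v i‖ ^ 2 = 1 := by
    rw [← hfl]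
    refine Finset.sum_congr rfl fun i _ => ?_
    rw [norm_mul, norm_pow, Complex.norm_real, Real.norm_eq_abs, abs_of_pos hl0]
  exact ⟨⟨fun i => (l : ℂ) ^ χ i * v i, hsum⟩, l, hl0, fun i => rfl⟩

lemma sph_exists_ne_zero (m : ℕ) (z : Sph m) : ∃ j, (z : Fin m → ℂ) j ≠ 0 := by
  by_contra h
  push_neg at h
  have := z.2
  simp only [h, map_zero] at this
  simp at this

/-- For weight vectors `ω, χ`, the composition
`e(χ/ω) ∘ e(ω/χ) : P(χ) → P(χ)` is the `s''`-th power map, where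
`s'' = s(ω,χ)·s(χ,ω)`. -/
theorem statement5 (n : ℕ) (hn : 1 ≤ n) (ω χ : Fin (n + 1) → ℕ)
    (hω : ∀ i, 1 ≤ ω i) (hχ : ∀ i, 1 ≤ χ i)
    (e1 : WP (n + 1) χ → WP (n + 1) ω) (h1 : IsEMap (n + 1) ω χ e1)
    (e2 : WP (n + 1) ω → WP (n + 1) χ) (h2 : IsEMap (n + 1) χ ω e2)
    (p : WP (n + 1) χ → WP (n + 1) χ)
    (hp : IsPowMap (n + 1) χ (sVal (n + 1) ω χ * sVal (n + 1) χ ω) p) :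
    e2 ∘ e1 = p := by
  obtain ⟨hs1pos, hs1dvd⟩ := sVal_spec (n + 1) ω χ hχ
  obtain ⟨hs2pos, hs2dvd⟩ := sVal_spec (n + 1) χ ω hω
  set s1 := sVal (n + 1) ω χ
  set s2 := sVal (n + 1) χ ω
  -- key arithmetic: d1 i * d2 i = s1 * s2, and ω i * d2 i = s2 * χ i
  have hωd2 : ∀ i, ω i * dExp (n + 1) χ ω i = s2 * χ i := fun i =>
    Nat.mul_div_cancel' (hs2dvd i)
  have hd12 : ∀ i, dExp (n + 1) ω χ i * dExp (n + 1) χ ω i = s1 * s2 := by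
    intro i
    have hχi : 0 < χ i := hχ i
    have hωi : 0 < ω i := hω i
    unfold dExp
    rw [Nat.div_mul_div_comm (hs1dvd i) (hs2dvd i)]
    have : s1 * ω i * (s2 * χ i) = s1 * s2 * (χ i * ω i) := by ring
    rw [this, Nat.mul_div_cancel _ (by positivity)]
  funext x
  induction x using Quot.ind with
  | _ z =>
  obtain ⟨j, hj⟩ := sph_exists_ne_zero (n + 1) z
  -- first map
  have hv1 : powVec (n + 1) (dExp (n + 1) ω χ) z j ≠ 0 := pow_ne_zero _ hj
  obtain ⟨w1, hw1⟩ := exists_norm (n + 1) ω hω _ j hv1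
  have he1 : e1 (wpMk (n + 1) χ z) = wpMk (n + 1) ω w1 := h1.2 z w1 hw1
  obtain ⟨l1, hl1, hw1eq⟩ := hw1
  have hw1j : (w1 : Fin (n + 1) → ℂ) j ≠ 0 := by
    rw [hw1eq j]
    exact mul_ne_zero (pow_ne_zero _ (by exact_mod_cast hl1.ne')) hv1
  -- second map
  have hv2 : powVec (n + 1) (dExp (n + 1) χ ω) w1 j ≠ 0 := pow_ne_zero _ hw1j
  obtain ⟨w2, hw2⟩ := exists_norm (n + 1) χ hχ _ j hv2
  have he2 : e2 (wpMk (n + 1) ω w1) = wpMk (n + 1) χ w2 := h2.2 w1 w2 hw2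
  obtain ⟨l2, hl2, hw2eq⟩ := hw2
  -- the power map also sends [z] to [w2]
  have hpz : p (wpMk (n + 1) χ z) = wpMk (n + 1) χ w2 := by
    refine hp.2 z w2 ⟨l2 * l1 ^ s2, by positivity, fun i => ?_⟩
    have h1i : (w1 : Fin (n + 1) → ℂ) i = (l1 : ℂ) ^ ω i * (z : Fin (n + 1) → ℂ) i ^ dExp (n + 1) ω χ i :=
      hw1eq i
    have h2i : (w2 : Fin (n + 1) → ℂ) i = (l2 : ℂ) ^ χ i * (w1 : Fin (n + 1) → ℂ) i ^ dExp (n + 1) χ ω i :=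
      hw2eq i
    rw [h2i, h1i, mul_pow, ← pow_mul, ← pow_mul, hωd2 i, hd12 i]
    push_cast
    ring
  show (e2 ∘ e1) (wpMk (n + 1) χ z) = p (wpMk (n + 1) χ z)
  rw [Function.comp_apply, he1, he2, hpz]
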